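/- Let r ≥ 3, n = p_1^{n_1}⋯p_r^{n_r} with primes p_1 < ... < p_r, and define β_a^s = φ(n) + (n/(p_1⋯p_r))·(1/p_a^{s-1})·[ (p_1⋯p_r)/p_a + φ((p_1⋯p_r)/p_a)·(p_a^{s-1} − 2) ] for a ∈ [r], s ∈ [n_a]. Fix a with n_a ≥ 2. If 2·φ((p_1⋯p_r)/p_a) > (p_1⋯p_r)/p_a then β_a^1 < β_a^2 < ... < β_a^{n_a}; if 2·φ((p_1⋯p_r)/p_a) < (p_1⋯p_r)/p_a then β_a^1 > β_a^2 > ... > β_a^{n_a}. -/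

import Mathlib

noncomputable def beta (r : ℕ) (p e : ℕ → ℕ) (a s : ℕ) : ℚ :=
  (Nat.totient (∏ i ∈ Finset.range r, p i ^ e i) : ℚ) +
    ((∏ i ∈ Finset.range r, p i ^ e i : ℕ) : ℚ) /
        ((∏ i ∈ Finset.range r, p i : ℕ) : ℚ) *
      (1 / (p a : ℚ) ^ (s - 1)) *
      (((∏ i ∈ Finset.range r, p i : ℕ) : ℚ) / (p a : ℚ) +
        (Nat.totient ((∏ i ∈ Finset.range r, p i) / p a) : ℚ) *
          ((p a : ℚ) ^ (s - 1) - 2))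

theorem stmt_10 (r : ℕ) (hr : 3 ≤ r) (p e : ℕ → ℕ)
    (hp : ∀ i < r, (p i).Prime)
    (hmono : ∀ i j, i < j → j < r → p i < p j)
    (he : ∀ i < r, 1 ≤ e i)
    (a : ℕ) (ha : a < r) (hea : 2 ≤ e a) :
    (2 * Nat.totient ((∏ i ∈ Finset.range r, p i) / p a) >
        (∏ i ∈ Finset.range r, p i) / p a →
      ∀ s, 1 ≤ s → s < e a → beta r p e a s < beta r p e a (s + 1)) ∧
    (2 * Nat.totient ((∏ i ∈ Finset.range r, p i) / p a) <
        (∏ i ∈ Finset.range r, p i) / p a →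
      ∀ s, 1 ≤ s → s < e a → beta r p e a s > beta r p e a (s + 1)) := by
  set P : ℕ := ∏ i ∈ Finset.range r, p i with hP
  set N : ℕ := ∏ i ∈ Finset.range r, p i ^ e i with hN
  set Q : ℕ := P / p a with hQ
  have hpa : (p a).Prime := hp a ha
  have hpa0 : (0 : ℚ) < (p a : ℚ) := by exact_mod_cast hpa.pos
  have hpa1 : (1 : ℚ) < (p a : ℚ) := by exact_mod_cast hpa.one_lt
  have hPpos : 0 < P := Finset.prod_pos (fun i hi => (hp i (Finset.mem_range.mp hi)).pos)
  have hNpos : 0 < N := Finset.prod_pos (fun i hi =>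
    pow_pos (hp i (Finset.mem_range.mp hi)).pos _)
  have hPq : (0 : ℚ) < (P : ℚ) := by exact_mod_cast hPpos
  have hNq : (0 : ℚ) < (N : ℚ) := by exact_mod_cast hNpos
  have hdvd : p a ∣ P := Finset.dvd_prod_of_mem _ (Finset.mem_range.mpr ha)
  have hQcast : ((Q : ℕ) : ℚ) = (P : ℚ) / (p a : ℚ) :=
    Nat.cast_div hdvd (ne_of_gt hpa0)
  -- key difference formula
  have key : ∀ t : ℕ, beta r p e a (t + 2) - beta r p e a (t + 1) =
      (N : ℚ) / P * ((Q : ℚ) - 2 * (Nat.totient Q : ℚ)) *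
        (1 / (p a : ℚ) ^ (t + 1) - 1 / (p a : ℚ) ^ t) := by
    intro t
    unfold beta
    rw [← hP, ← hN, ← hQ, ← hQcast]
    simp only [Nat.add_sub_cancel]
    have h1 : t + 2 - 1 = t + 1 := rfl
    rw [h1]
    have hp0 : (p a : ℚ) ≠ 0 := ne_of_gt hpa0
    have hpt : (p a : ℚ) ^ t ≠ 0 := pow_ne_zero _ hp0
    have hpt1 : (p a : ℚ) ^ (t + 1) ≠ 0 := pow_ne_zero _ hp0
    field_simp
    ring
  have hApos : (0 : ℚ) < (N : ℚ) / P := div_pos hNq hPq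
  have hCneg : ∀ t : ℕ, (1 / (p a : ℚ) ^ (t + 1) - 1 / (p a : ℚ) ^ t) < 0 := by
    intro t
    have h1 : (0 : ℚ) < (p a : ℚ) ^ t := pow_pos hpa0 t
    have h2 : (p a : ℚ) ^ t < (p a : ℚ) ^ (t + 1) :=
      pow_lt_pow_right₀ hpa1 (Nat.lt_succ_self t)
    have := one_div_lt_one_div_of_lt h1 h2
    linarith
  constructor
  · intro hgt s hs _
    obtain ⟨t, rfl⟩ : ∃ t, s = t + 1 := ⟨s - 1, (Nat.succ_pred_eq_of_pos hs).symm⟩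
    have hB : (Q : ℚ) - 2 * (Nat.totient Q : ℚ) < 0 := by
      have : (Q : ℚ) < 2 * (Nat.totient Q : ℚ) := by exact_mod_cast hgt
      linarith
    have := key t
    nlinarith [mul_pos hApos (mul_pos_of_neg_of_neg hB (hCneg t))]
  · intro hlt s hs _
    obtain ⟨t, rfl⟩ : ∃ t, s = t + 1 := ⟨s - 1, (Nat.succ_pred_eq_of_pos hs).symm⟩
    have hB : 0 < (Q : ℚ) - 2 * (Nat.totient Q : ℚ) := by
      have : 2 * (Nat.totient Q : ℚ) < (Q : ℚ) := by exact_mod_cast hlt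
      linarith
    have := key t
    nlinarith [mul_neg_of_pos_of_neg (mul_pos hApos hB) (hCneg t)]
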